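/- Let A ∈ ℝ^{n×n}. If the complexification of A (A viewed as a complex n×n matrix) is diagonalizable over ℂ and every eigenvalue λ ∈ ℂ of A has modulus |λ| = 1, then there exists a symmetric positive definite matrix Q ∈ ℝ^{n×n} such that AᵀQA = Q. -/

import Mathlib

open Matrix

section aux

open Complex

/-- Real part of a complex matrix, entrywise. -/
noncomputable def reMat {m k : Type*} (B : Matrix m k ℂ) : Matrix m k ℝ :=
  Matrix.of fun i j => (B i j).re

lemma reMat_map_mul {m k l : Type*} [Fintype k] (C : Matrix m k ℝ) (B : Matrix k l ℂ) :
    reMat ((C.map (Complex.ofReal)) * B) = C * reMat B := by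
  ext i j
  simp [reMat, Matrix.mul_apply, Complex.re_sum, Complex.mul_re]

lemma reMat_mul_map {m k l : Type*} [Fintype k] (B : Matrix m k ℂ) (C : Matrix k l ℝ) :
    reMat (B * (C.map (Complex.ofReal))) = reMat B * C := by
  ext i j
  simp [reMat, Matrix.mul_apply, Complex.re_sum, Complex.mul_re]

end aux

set_option maxHeartbeats 1000000 in
set_option synthInstance.maxHeartbeats 400000 in
/-- If the complexification of a real matrix `A` is diagonalizable over `ℂ` (the
eigenspaces span `ℂⁿ`) and all its eigenvalues have modulus one, then there is a
symmetric positive definite `Q` with `AᵀQA = Q`. -/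
theorem invariant_quadratic_form_of_unit_spectrum {n : ℕ} (A : Matrix (Fin n) (Fin n) ℝ)
    (hdiag : ⨆ lam : ℂ,
      Module.End.eigenspace (Matrix.toLin' (A.map (Complex.ofReal))) lam = ⊤)
    (hmod : ∀ lam : ℂ,
      Module.End.HasEigenvalue (Matrix.toLin' (A.map (Complex.ofReal))) lam → ‖lam‖ = 1) :
    ∃ Q : Matrix (Fin n) (Fin n) ℝ, Q.PosDef ∧ Aᵀ * Q * A = Q := by
  classical
  set Aℂ : Matrix (Fin n) (Fin n) ℂ := A.map (Complex.ofReal) with hAℂ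
  set f : Module.End ℂ (Fin n → ℂ) := Matrix.toLin' Aℂ with hfdef
  have hind : iSupIndep f.eigenspace := Module.End.eigenspaces_iSupIndep f
  have hInt : DirectSum.IsInternal (fun μ : ℂ => f.eigenspace μ) :=
    DirectSum.isInternal_submodule_of_iSupIndep_of_iSup_eq_top hind hdiag
  let v : ∀ μ : ℂ, Module.Basis (Module.Free.ChooseBasisIndex ℂ (f.eigenspace μ)) ℂ (f.eigenspace μ) :=
    fun μ => Module.Free.chooseBasis ℂ (f.eigenspace μ)
  let b := hInt.collectedBasis v
  haveI : Fintype (Σ μ : ℂ, Module.Free.ChooseBasisIndex ℂ (f.eigenspace μ)) :=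
    FiniteDimensional.fintypeBasisIndex b
  -- each basis vector is an eigenvector
  have hb_mem : ∀ i, f (b i) = i.1 • b i := by
    intro i
    exact Module.End.mem_eigenspace_iff.mp (hInt.collectedBasis_mem v i)
  have hmul1 : ∀ i : (Σ μ : ℂ, Module.Free.ChooseBasisIndex ℂ (f.eigenspace μ)),
      star i.1 * i.1 = 1 := by
    intro i
    have hev : Module.End.HasEigenvalue f i.1 :=
      Module.End.hasEigenvalue_of_hasEigenvector ⟨hInt.collectedBasis_mem v i, b.ne_zero i⟩
    have hn : ‖i.1‖ = 1 := hmod i.1 hev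
    rw [← starRingEnd_apply, mul_comm, Complex.mul_conj, Complex.normSq_eq_norm_sq,
      hn]
    norm_num
  -- the coordinate matrix
  set M : Matrix (Σ μ : ℂ, Module.Free.ChooseBasisIndex ℂ (f.eigenspace μ)) (Fin n) ℂ :=
    Matrix.of (fun k j => b.repr (Pi.single j 1) k) with hM
  have hMv : ∀ x : Fin n → ℂ, M *ᵥ x = b.repr x := by
    intro x
    funext k
    have hx : x = ∑ j, x j • (Pi.single j 1 : Fin n → ℂ) := by
      funext p
      simp [Pi.single_apply, mul_ite, Finset.sum_ite_eq', eq_comm]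
    calc (M *ᵥ x) k = ∑ j, x j * b.repr (Pi.single j 1) k := by
          simp [Matrix.mulVec, dotProduct, hM, mul_comm]
      _ = b.repr (∑ j, x j • (Pi.single j 1 : Fin n → ℂ)) k := by
          simp [map_sum]
      _ = b.repr x k := by rw [← hx]
  -- repr of f x scales coordinates by the eigenvalues
  have hrepr : ∀ x : Fin n → ℂ, ∀ k, b.repr (f x) k = k.1 * b.repr x k := by
    intro x k
    have hx : f x = ∑ i, (i.1 * b.repr x i) • b i := by
      conv_lhs => rw [← b.sum_repr x]
      rw [map_sum]
      refine Finset.sum_congr rfl fun i _ => ?_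
      rw [LinearMap.map_smul, hb_mem i, smul_smul, mul_comm]
    rw [hx, b.repr_sum_self]
  -- M * Aℂ scales rows by eigenvalues
  have hMA : M * Aℂ = Matrix.of (fun k j => k.1 * M k j) := by
    ext k j
    have h1 : (M * Aℂ) k j = (M *ᵥ fun q => Aℂ q j) k := by
      simp [Matrix.mul_apply, Matrix.mulVec, dotProduct]
    have h2 : (fun q => Aℂ q j) = f (Pi.single j 1) := by
      funext q
      simp [hfdef, Matrix.toLin'_apply, Matrix.mulVec_single]
    rw [h1, h2, hMv, hrepr]
    simp [hM]
  -- the invariant Hermitian matrix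
  set Hc : Matrix (Fin n) (Fin n) ℂ := Mᴴ * M with hHc
  have hAH : Aℂᴴ = Aᵀ.map (Complex.ofReal) := by
    ext i j
    simp [hAℂ, Matrix.conjTranspose_apply, Complex.conj_ofReal]
  have hinv : Aℂᴴ * Hc * Aℂ = Hc := by
    have h1 : Aℂᴴ * Hc * Aℂ = (M * Aℂ)ᴴ * (M * Aℂ) := by
      simp [hHc, Matrix.conjTranspose_mul, Matrix.mul_assoc]
    rw [h1, hMA]
    ext i j
    rw [hHc, Matrix.mul_apply, Matrix.mul_apply]
    refine Finset.sum_congr rfl fun k _ => ?_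
    simp only [Matrix.conjTranspose_apply, Matrix.of_apply, star_mul']
    have h3 : star k.1 * star (M k i) * (k.1 * M k j)
        = star k.1 * k.1 * (star (M k i) * M k j) := by ring
    rw [h3, hmul1, one_mul]
  -- the real invariant quadratic form
  refine ⟨reMat Hc, ?_, ?_⟩
  · rw [Matrix.posDef_iff_dotProduct_mulVec]
    constructor
    · -- Hermitian
      have hHerm : Hcᴴ = Hc := by
        simp [hHc, Matrix.conjTranspose_mul]
      ext i j
      have h2 := congrArg (fun B => (B i j).re) hHerm
      simp only [Matrix.conjTranspose_apply, Complex.conj_re] at h2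
      simpa [reMat, Matrix.conjTranspose_apply] using h2
    · intro x hx
      set xc : Fin n → ℂ := fun i => (x i : ℂ) with hxc
      have hxc0 : xc ≠ 0 := by
        intro h
        apply hx
        funext i
        exact Complex.ofReal_eq_zero.mp (by simpa [hxc] using congrFun h i)
      set w : _ → ℂ := M *ᵥ xc with hw
      have hw0 : w ≠ 0 := by
        rw [hw, hMv]
        intro h
        apply hxc0
        have : b.repr xc = 0 := by
          ext k; exact congrFun h k
        simpa using congrArg b.repr.symm this
      -- x ⬝ᵥ (reMat Hc) *ᵥ x = re (xc ⬝ᵥ Hc *ᵥ xc)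
      have key : star x ⬝ᵥ (reMat Hc) *ᵥ x = (star xc ⬝ᵥ Hc *ᵥ xc).re := by
        simp [reMat, dotProduct, Matrix.mulVec, Complex.re_sum, Complex.mul_re,
          Finset.mul_sum, hxc]
      have key2 : star xc ⬝ᵥ Hc *ᵥ xc = star w ⬝ᵥ w := by
        rw [hHc, ← Matrix.mulVec_mulVec, Matrix.dotProduct_mulVec, ← Matrix.star_mulVec]
      rw [key, key2]
      have h4 : (star w ⬝ᵥ w).re = ∑ k, Complex.normSq (w k) := by
        simp only [dotProduct, Complex.re_sum]
        refine Finset.sum_congr rfl fun k _ => ?_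
        simp [Complex.mul_re, Complex.normSq_apply]
      rw [h4]
      obtain ⟨k, hk⟩ : ∃ k, w k ≠ 0 := by
        by_contra hc
        push_neg at hc
        exact hw0 (funext hc)
      exact Finset.sum_pos' (fun k _ => Complex.normSq_nonneg _)
        ⟨k, Finset.mem_univ k, Complex.normSq_pos.mpr hk⟩
  · have h5 : (Aᵀ.map Complex.ofReal) * Hc * (A.map Complex.ofReal) = Hc := by
      rw [← hAH, ← hAℂ]; exact hinv
    calc Aᵀ * reMat Hc * A = reMat (Aᵀ.map Complex.ofReal * Hc) * A := by
          rw [reMat_map_mul]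
      _ = reMat (Aᵀ.map Complex.ofReal * Hc * (A.map Complex.ofReal)) := by
          rw [reMat_mul_map]
      _ = reMat Hc := by rw [h5]
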